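/- Let (A, θ) be a monounary algebra and x, y ∈ A acyclic elements with A_x = ⋃_{k ≥ 0} θ^{-k}(x) and A_y = ⋃_{k ≥ 0} θ^{-k}(y). Suppose for every n ≥ 0 and every a ∈ θ^{-n}(x) ∩ A_x, b ∈ θ^{-n}(y) ∩ A_y we have |θ⁻¹(a)| = |θ⁻¹(b)|. Then the partial algebras A_x and A_y are isomorphic: there exists a bijection ψ : A_x → A_y with ψ(x) = y such that for all a ∈ A_x with θ(a) ∈ A_x, ψ(θ(a)) = θ(ψ(a)). -/
import Mathlib

open Function

private lemma level_unique {A : Type*} (θ : A → A) (x : A)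
    (hx : ¬ ∃ k ≥ 1, θ^[k] x = x) :
    ∀ {a : A} {m n : ℕ}, θ^[m] a = x → θ^[n] a = x → m = n := by
  have key : ∀ {a : A} {m n : ℕ}, m ≤ n → θ^[m] a = x → θ^[n] a = x → m = n := by
    intro a m n hle hm hn
    obtain ⟨d, rfl⟩ := Nat.exists_eq_add_of_le hle
    by_contra hne
    apply hx
    refine ⟨d, by omega, ?_⟩
    rw [← hm, ← Function.iterate_add_apply, Nat.add_comm d m]
    exact hn.trans hm.symm
  intro a m n hm hn
  rcases le_total m n with h | h
  · exact key h hm hn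
  · exact (key h hn hm).symm

private noncomputable def splitE {A : Type*} (θ : A → A) (z : A) (n : ℕ) :
    {a // θ^[n+1] a = z} ≃ Σ p : {a // θ^[n] a = z}, {c // θ c = p.1} where
  toFun a := ⟨⟨θ a.1, a.2⟩, ⟨a.1, rfl⟩⟩
  invFun s := ⟨s.2.1, by
    show θ^[n] (θ s.2.1) = z
    rw [s.2.2]; exact s.1.2⟩
  left_inv a := rfl
  right_inv s := by
    obtain ⟨⟨p, hp⟩, ⟨c, hc⟩⟩ := s
    have hc' : θ c = p := hc
    subst hc'
    rfl

private noncomputable def fe {A : Type*} (θ : A → A) (x y : A)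
    (hcard : ∀ (n : ℕ) (a b : A), θ^[n] a = x → θ^[n] b = y →
      Cardinal.mk {c | θ c = a} = Cardinal.mk {c | θ c = b}) :
    ∀ n : ℕ, {a // θ^[n] a = x} ≃ {b // θ^[n] b = y}
  | 0 => ⟨fun _ => ⟨y, rfl⟩, fun _ => ⟨x, rfl⟩,
      fun a => Subtype.ext a.2.symm, fun b => Subtype.ext b.2.symm⟩
  | n+1 =>
    (splitE θ x n).trans
      ((Equiv.sigmaCongr (fe θ x y hcard n) (fun p =>
        Classical.choice (Cardinal.eq.1
          (hcard n p.1 ((fe θ x y hcard n) p).1 p.2 ((fe θ x y hcard n) p).2)))).trans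
        (splitE θ y n).symm)

private lemma fe_comm {A : Type*} (θ : A → A) (x y : A)
    (hcard : ∀ (n : ℕ) (a b : A), θ^[n] a = x → θ^[n] b = y →
      Cardinal.mk {c | θ c = a} = Cardinal.mk {c | θ c = b})
    (n : ℕ) (a : A) (h : θ^[n+1] a = x) :
    θ ((fe θ x y hcard (n+1) ⟨a, h⟩).1) = (fe θ x y hcard n ⟨θ a, h⟩).1 := by
  exact (Classical.choice (Cardinal.eq.1
    (hcard n (θ a) ((fe θ x y hcard n) ⟨θ a, h⟩).1 h
      ((fe θ x y hcard n) ⟨θ a, h⟩).2)) ⟨a, rfl⟩).2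

theorem stmt_12 {A : Type*} (θ : A → A) (x y : A)
    (hx : ¬ ∃ k ≥ 1, θ^[k] x = x) (hy : ¬ ∃ k ≥ 1, θ^[k] y = y)
    (hcard : ∀ (n : ℕ) (a b : A), θ^[n] a = x → θ^[n] b = y →
      Cardinal.mk {c | θ c = a} = Cardinal.mk {c | θ c = b}) :
    ∃ ψ : A → A, Set.BijOn ψ {a | ∃ k : ℕ, θ^[k] a = x} {a | ∃ k : ℕ, θ^[k] a = y} ∧
      ψ x = y ∧
      ∀ a : A, (∃ k : ℕ, θ^[k] a = x) → (∃ k : ℕ, θ^[k] (θ a) = x) →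
        ψ (θ a) = θ (ψ a) := by
  classical
  have hux : ∀ {a : A} {m n : ℕ}, θ^[m] a = x → θ^[n] a = x → m = n := level_unique θ x hx
  have huy : ∀ {a : A} {m n : ℕ}, θ^[m] a = y → θ^[n] a = y → m = n := level_unique θ y hy
  set e := fe θ x y hcard with he
  set ψ : A → A := fun a =>
    if h : ∃ k, θ^[k] a = x then (e (Nat.find h) ⟨a, Nat.find_spec h⟩).1 else a with hψ
  have hspec : ∀ (a : A) (n : ℕ) (hn : θ^[n] a = x), ψ a = (e n ⟨a, hn⟩).1 := by
    intro a n hn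
    have h : ∃ k, θ^[k] a = x := ⟨n, hn⟩
    have hfind : n = Nat.find h := hux hn (Nat.find_spec h)
    rw [hψ]
    simp only
    rw [dif_pos h]
    subst hfind
    rfl
  refine ⟨ψ, ⟨?_, ?_, ?_⟩, ?_, ?_⟩
  · -- MapsTo
    rintro a ⟨n, hn⟩
    rw [hspec a n hn]
    exact ⟨n, (e n ⟨a, hn⟩).2⟩
  · -- InjOn
    rintro a ⟨m, hm⟩ b ⟨n, hn⟩ hab
    rw [hspec a m hm, hspec b n hn] at hab
    have hmn : m = n := by
      refine huy (e m ⟨a, hm⟩).2 ?_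
      rw [hab]
      exact (e n ⟨b, hn⟩).2
    subst hmn
    have := (e m).injective (Subtype.ext hab)
    exact congrArg Subtype.val this
  · -- SurjOn
    rintro b ⟨n, hn⟩
    refine ⟨((e n).symm ⟨b, hn⟩).1, ⟨n, ((e n).symm ⟨b, hn⟩).2⟩, ?_⟩
    rw [hspec _ n ((e n).symm ⟨b, hn⟩).2]
    have : e n ⟨((e n).symm ⟨b, hn⟩).1, ((e n).symm ⟨b, hn⟩).2⟩ = ⟨b, hn⟩ :=
      (e n).apply_symm_apply _
    exact congrArg Subtype.val this
  · -- ψ x = y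
    rw [hspec x 0 rfl]
    rfl
  · -- commuting
    rintro a ⟨k, hk⟩ ⟨n, hn⟩
    have h1 : θ^[n+1] a = x := hn
    rw [hspec (θ a) n hn, hspec a (n+1) h1]
    exact (fe_comm θ x y hcard n a h1).symm
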